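/- For every real δ > 0 there exists t₀ such that for every prime p and every integer t ≥ t₀ there exist a positive integer m and a finite set S ⊆ (ℤ/pℤ)^m × (ℤ/pℤ)^m with |S| = t and |π₁(S)| + |π₂(S)| + |{x + y : (x, y) ∈ S}| ≤ (7 + δ)·√t, where π₁(S) and π₂(S) denote the images of S under the two coordinate projections. -/

import Mathlib

lemma aux_cons_add_cons {j : ℕ} {α : Type} [Add α] (a b : α) (w w' : Fin j → α) :
    (Fin.cons a w + Fin.cons b w' : Fin (j+1) → α) = Fin.cons (a+b) (w+w') := by
  funext i; refine Fin.cases ?_ ?_ i <;> simp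

lemma aux_numeric (p t : ℕ) (hp2 : 2 ≤ p) (ht : 1 ≤ t) :
    ∃ j n : ℕ, 1 ≤ n ∧ n ≤ p ∧ t ≤ (n * p ^ j) * (n * p ^ j) ∧
      ((2 * (n * p ^ j) + (2 * n - 1) * p ^ j : ℕ) : ℝ) ≤ 7 * Real.sqrt t := by
  obtain ⟨L, hL⟩ : ∃ L, L = Nat.log p t := ⟨_, rfl⟩
  obtain ⟨j, hj⟩ : ∃ j, j = L / 2 := ⟨_, rfl⟩
  obtain ⟨q, hq⟩ : ∃ q, q = p ^ j := ⟨_, rfl⟩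
  obtain ⟨s, hs⟩ : ∃ s, s = Nat.sqrt (t - 1) := ⟨_, rfl⟩
  obtain ⟨n, hn⟩ : ∃ n, n = s / q + 1 := ⟨_, rfl⟩
  have hq0 : 0 < q := by rw [hq]; exact pow_pos (by omega) j
  have hn1 : 1 ≤ n := by rw [hn]; exact Nat.succ_le_succ (Nat.zero_le _)
  have hq2t : q * q ≤ t := by
    have h1 : p ^ (j + j) ≤ p ^ L := Nat.pow_le_pow_right (by omega) (by omega)
    have h2 : p ^ L ≤ t := hL ▸ Nat.pow_log_le_self p (by omega)
    calc q * q = p ^ (j + j) := by rw [hq, ← pow_add]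
    _ ≤ t := le_trans h1 h2
  have htqp : t < (q * p) * (q * p) := by
    have h1 : t < p ^ (L + 1) := hL ▸ Nat.lt_pow_succ_log_self (by omega) t
    have h2 : p ^ (L + 1) ≤ p ^ (j + 1 + (j + 1)) := Nat.pow_le_pow_right (by omega) (by omega)
    have h3 : p ^ (j + 1 + (j + 1)) = (q * p) * (q * p) := by
      rw [hq, ← pow_succ, ← pow_add]
    calc t < p ^ (L + 1) := h1
    _ ≤ p ^ (j + 1 + (j + 1)) := h2
    _ = (q * p) * (q * p) := h3
  have hss : s * s ≤ t - 1 := by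
    rw [hs]
    have h := Nat.sqrt_le' (t - 1)
    rwa [pow_two] at h
  have hsqp : s < q * p := by
    by_contra hcon
    push_neg at hcon
    have h1 : (q * p) * (q * p) ≤ s * s := Nat.mul_le_mul hcon hcon
    have h2 : t < t :=
      lt_of_lt_of_le htqp (h1.trans (hss.trans (Nat.sub_le t 1)))
    exact lt_irrefl t h2
  have hnp : n ≤ p := by
    have h1 : s / q < p := (Nat.div_lt_iff_lt_mul hq0).2 (by rw [mul_comm p q]; exact hsqp)
    rw [hn]
    exact h1
  have hsnq : s < n * q := by
    rw [hn]
    have h2 : s % q < q := Nat.mod_lt s hq0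
    calc s = s % q + q * (s / q) := (Nat.mod_add_div s q).symm
    _ < q + q * (s / q) := Nat.add_lt_add_right h2 _
    _ = (s / q + 1) * q := by ring
  have hnqs : n * q ≤ s + q := by
    rw [hn]
    calc (s / q + 1) * q = s / q * q + q := by ring
    _ ≤ s + q := Nat.add_le_add_right (Nat.div_mul_le_self s q) q
  have htnq : t ≤ (n * q) * (n * q) := by
    have h1 : t - 1 < (s + 1) * (s + 1) := by
      rw [hs]
      have h := Nat.lt_succ_sqrt' (t - 1)
      rwa [pow_two] at h
    have h2 : (s + 1) * (s + 1) ≤ (n * q) * (n * q) := Nat.mul_le_mul hsnq hsnq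
    have h3 : t ≤ (s + 1) * (s + 1) := by omega
    exact h3.trans h2
  refine ⟨j, n, hn1, hnp, by rw [← hq]; exact htnq, ?_⟩
  have hsr : (s : ℝ) ≤ Real.sqrt t := by
    have h0 : s * s ≤ t := hss.trans (Nat.sub_le t 1)
    have h1 : ((s : ℝ)) ^ 2 ≤ (t : ℝ) := by rw [sq]; exact_mod_cast h0
    have h2 := Real.sqrt_le_sqrt h1
    rwa [Real.sqrt_sq (by positivity)] at h2
  have hqr : (q : ℝ) ≤ Real.sqrt t := by
    have h1 : ((q : ℝ)) ^ 2 ≤ (t : ℝ) := by rw [sq]; exact_mod_cast hq2t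
    have h2 := Real.sqrt_le_sqrt h1
    rwa [Real.sqrt_sq (by positivity)] at h2
  have htotal : 2 * (n * q) + (2 * n - 1) * q ≤ 4 * s + 3 * q := by
    have h1 : (2 * n - 1) * q + q = 2 * (n * q) := by
      have h : (2 * n - 1) + 1 = 2 * n := by omega
      calc (2 * n - 1) * q + q = ((2 * n - 1) + 1) * q := by ring
      _ = 2 * n * q := by rw [h]
      _ = 2 * (n * q) := by ring
    nlinarith [hnqs]
  calc ((2 * (n * p ^ j) + (2 * n - 1) * p ^ j : ℕ) : ℝ)
      = ((2 * (n * q) + (2 * n - 1) * q : ℕ) : ℝ) := by rw [hq]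
    _ ≤ ((4 * s + 3 * q : ℕ) : ℝ) := by exact_mod_cast htotal
    _ = 4 * (s : ℝ) + 3 * (q : ℝ) := by push_cast; ring
    _ ≤ 7 * Real.sqrt t := by linarith

/-- In the addition table of `(ℤ/pℤ)^m` for suitable `m` one can find `t` cells
spanning at most `(7 + o(1))·√t` vertices, uniformly in the prime `p`. -/
theorem stmt_15 :
    ∀ δ : ℝ, 0 < δ →
    ∃ t₀ : ℕ, ∀ p : ℕ, p.Prime → ∀ t : ℕ, t₀ ≤ t →
      ∃ m : ℕ, 0 < m ∧
        ∃ S : Finset ((Fin m → ZMod p) × (Fin m → ZMod p)),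
          S.card = t ∧
          (((S.image Prod.fst).card + (S.image Prod.snd).card
            + (S.image fun xy => xy.1 + xy.2).card : ℕ) : ℝ) ≤
              (7 + δ) * Real.sqrt t := by
  intro δ hδ
  refine ⟨1, fun p hp t ht => ?_⟩
  have hp2 : 2 ≤ p := hp.two_le
  haveI : NeZero p := ⟨by omega⟩
  obtain ⟨j, n, hn1, hnp, htnq, hreal⟩ := aux_numeric p t hp2 ht
  refine ⟨j + 1, Nat.succ_pos j, ?_⟩
  set f : Fin n × (Fin j → ZMod p) → (Fin (j+1) → ZMod p) :=
    fun x => Fin.cons (((x.1 : ℕ) : ZMod p)) x.2 with hf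
  have hfinj : Function.Injective f := by
    rintro ⟨x, w⟩ ⟨y, w'⟩ h
    simp only [hf] at h
    have h1 : (((x : ℕ) : ZMod p)) = (((y : ℕ) : ZMod p)) := by
      have := congrArg (fun v => v 0) h
      simpa using this
    have h2 : w = w' := by
      funext i
      have := congrArg (fun v => v i.succ) h
      simpa using this
    have hx : (x : ℕ) < p := lt_of_lt_of_le x.2 hnp
    have hy : (y : ℕ) < p := lt_of_lt_of_le y.2 hnp
    have h3 : (x : ℕ) = (y : ℕ) := by
      have := congrArg ZMod.val h1
      rwa [ZMod.val_cast_of_lt hx, ZMod.val_cast_of_lt hy] at this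
    exact Prod.ext (Fin.ext h3) h2
  set A : Finset (Fin (j+1) → ZMod p) := Finset.image f Finset.univ with hA
  have hAcard : A.card = n * p ^ j := by
    rw [hA, Finset.card_image_of_injective _ hfinj, Finset.card_univ]
    simp [ZMod.card]
  set g : Fin (2 * n - 1) × (Fin j → ZMod p) → (Fin (j+1) → ZMod p) :=
    fun x => Fin.cons (((x.1 : ℕ) : ZMod p)) x.2 with hg
  set D : Finset (Fin (j+1) → ZMod p) := Finset.image g Finset.univ with hD
  have hDcard : D.card ≤ (2 * n - 1) * p ^ j := by
    calc D.card ≤ Fintype.card (Fin (2 * n - 1) × (Fin j → ZMod p)) := by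
          rw [hD]; exact le_trans (Finset.card_image_le) (le_of_eq (Finset.card_univ))
    _ = (2 * n - 1) * p ^ j := by simp [ZMod.card]
  have hgrid : t ≤ (A ×ˢ A).card := by
    rw [Finset.card_product, hAcard]; exact htnq
  obtain ⟨S, hSsub, hScard⟩ := Finset.exists_subset_card_eq hgrid
  refine ⟨S, hScard, ?_⟩
  have hfst : S.image Prod.fst ⊆ A := by
    intro x hx
    obtain ⟨y, hy, rfl⟩ := Finset.mem_image.1 hx
    exact (Finset.mem_product.1 (hSsub hy)).1
  have hsnd : S.image Prod.snd ⊆ A := by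
    intro x hx
    obtain ⟨y, hy, rfl⟩ := Finset.mem_image.1 hx
    exact (Finset.mem_product.1 (hSsub hy)).2
  have hsum : S.image (fun xy => xy.1 + xy.2) ⊆ D := by
    intro z hz
    obtain ⟨y, hy, rfl⟩ := Finset.mem_image.1 hz
    obtain ⟨h1, h2⟩ := Finset.mem_product.1 (hSsub hy)
    rw [hA] at h1 h2
    obtain ⟨⟨x1, w1⟩, -, hx1⟩ := Finset.mem_image.1 h1
    obtain ⟨⟨x2, w2⟩, -, hx2⟩ := Finset.mem_image.1 h2
    rw [hD]
    refine Finset.mem_image.2 ⟨⟨⟨(x1 : ℕ) + (x2 : ℕ), ?_⟩, w1 + w2⟩, Finset.mem_univ _, ?_⟩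
    · have := x1.2; have := x2.2; omega
    · rw [← hx1, ← hx2]
      simp only [hf, hg, aux_cons_add_cons]
      push_cast
      ring_nf
  have hb1 : (S.image Prod.fst).card ≤ n * p ^ j := hAcard ▸ Finset.card_le_card hfst
  have hb2 : (S.image Prod.snd).card ≤ n * p ^ j := hAcard ▸ Finset.card_le_card hsnd
  have hb3 : (S.image (fun xy => xy.1 + xy.2)).card ≤ (2 * n - 1) * p ^ j :=
    le_trans (Finset.card_le_card hsum) hDcard
  have htotal : (S.image Prod.fst).card + (S.image Prod.snd).card
      + (S.image (fun xy => xy.1 + xy.2)).card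
      ≤ 2 * (n * p ^ j) + (2 * n - 1) * p ^ j := by omega
  have hcast : (((S.image Prod.fst).card + (S.image Prod.snd).card
      + (S.image fun xy => xy.1 + xy.2).card : ℕ) : ℝ)
      ≤ ((2 * (n * p ^ j) + (2 * n - 1) * p ^ j : ℕ) : ℝ) := by exact_mod_cast htotal
  have hsqrtpos : (0 : ℝ) ≤ Real.sqrt t := Real.sqrt_nonneg _
  calc (((S.image Prod.fst).card + (S.image Prod.snd).card
      + (S.image fun xy => xy.1 + xy.2).card : ℕ) : ℝ)
      ≤ 7 * Real.sqrt t := le_trans hcast hreal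
    _ ≤ (7 + δ) * Real.sqrt t := by nlinarith
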